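/- Define integer sequences h, k by h(0)=0, h(1)=1, k(0)=1, k(1)=1, and h(n+1) = h(n) + n·h(n−1), k(n+1) = k(n) + n·k(n−1) for n ≥ 1 (so the convergents h(n)/k(n) take the values 0/1, 1/1, 1/2, 3/4, 6/10, 18/26, 48/76, 156/232, …). Then the sequence h(n)/k(n) converges as n → ∞, and its limit equals √e · ∫_1^∞ e^{-t²/2} dt. -/

import Mathlib

open Real MeasureTheory Filter Set

/-- Numerators of the convergents of Euler's continued fraction
`1/(1 + 1/(1 + 2/(1 + 3/(1 + 4/(1 + ⋯)))))` (§29). -/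
def eulerCFh : ℕ → ℤ
  | 0 => 0
  | 1 => 1
  | n + 2 => eulerCFh (n + 1) + ((n + 1 : ℕ) : ℤ) * eulerCFh n

/-- Denominators of the convergents. -/
def eulerCFk : ℕ → ℤ
  | 0 => 1
  | 1 => 1
  | n + 2 => eulerCFk (n + 1) + ((n + 1 : ℕ) : ℤ) * eulerCFk n


noncomputable section EulerCF29

/-- integrand -/
def ecfG (n : ℕ) (u : ℝ) : ℝ := u ^ n * Real.exp (-(u - 1) ^ 2 / 2)

def ecfJ (n : ℕ) : ℝ := ∫ u in Set.Ioi (0:ℝ), ecfG n u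
def ecfI (n : ℕ) : ℝ := ∫ u, ecfG n u
def ecfE (n : ℕ) : ℝ := ∫ u in Set.Iic (0:ℝ), ecfG n u

lemma int_pow_gauss (n : ℕ) : Integrable (fun x : ℝ => x ^ n * Real.exp (-x ^ 2 / 2)) := by
  have h := integrable_rpow_mul_exp_neg_mul_sq (b := (1/2:ℝ)) (by norm_num)
    (s := (n:ℝ)) (by exact_mod_cast neg_one_lt_zero.trans_le n.cast_nonneg)
  refine h.congr (Filter.Eventually.of_forall fun x => ?_)
  simp only
  rw [Real.rpow_natCast]
  ring_nf

lemma int_shift_pow_gauss (c : ℝ) (n : ℕ) :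
    Integrable (fun u : ℝ => u ^ n * Real.exp (-(u - c) ^ 2 / 2)) := by
  have hF : Integrable (fun x : ℝ => (x + c) ^ n * Real.exp (-x ^ 2 / 2)) := by
    have : (fun x : ℝ => (x + c) ^ n * Real.exp (-x ^ 2 / 2))
        = fun x => ∑ k ∈ Finset.range (n+1),
            (n.choose k : ℝ) * c ^ (n - k) * (x ^ k * Real.exp (-x ^ 2 / 2)) := by
      funext x
      rw [add_pow, Finset.sum_mul]
      refine Finset.sum_congr rfl fun k _ => by ring
    rw [this]
    exact integrable_finset_sum _ fun k _ => ((int_pow_gauss k).const_mul _)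
  have h2 := hF.comp_sub_right c
  refine h2.congr (Filter.Eventually.of_forall fun u => ?_)
  simp [sub_add_cancel]

lemma int_g (n : ℕ) : Integrable (ecfG n) := int_shift_pow_gauss 1 n


lemma cont_g (n : ℕ) : Continuous (ecfG n) := by
  unfold ecfG; fun_prop

lemma hasDerivAt_g (n : ℕ) (u : ℝ) :
    HasDerivAt (ecfG (n+1))
      (((n:ℝ)+1) * ecfG n u + ecfG (n+1) u - ecfG (n+2) u) u := by
  have h1 : HasDerivAt (fun u : ℝ => u ^ (n+1)) (((n:ℝ)+1) * u ^ n) u := by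
    simpa using hasDerivAt_pow (n+1) u
  have h2 : HasDerivAt (fun u : ℝ => Real.exp (-(u - 1) ^ 2 / 2))
      (-(u - 1) * Real.exp (-(u - 1) ^ 2 / 2)) u := by
    have hi : HasDerivAt (fun u : ℝ => -(u - 1) ^ 2 / 2) (-(u - 1)) u := by
      have h : HasDerivAt (fun u : ℝ => u - 1) 1 u := (hasDerivAt_id u).sub_const 1
      have h2 := (h.pow 2).neg.div_const 2
      refine h2.congr_deriv ?_
      ring
    simpa [mul_comm] using hi.exp
  have := h1.mul h2
  refine this.congr_deriv ?_
  unfold ecfG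
  push_cast
  ring

lemma tendsto_g_atTop (n : ℕ) : Tendsto (ecfG n) atTop (nhds 0) := by
  apply squeeze_zero' (g := fun x : ℝ => x ^ n * Real.exp (-x))
  · filter_upwards [eventually_ge_atTop (1:ℝ)] with x hx
    unfold ecfG; positivity
  · filter_upwards [eventually_ge_atTop (4:ℝ)] with x hx
    unfold ecfG
    have hx0 : (0:ℝ) ≤ x := by linarith
    refine mul_le_mul_of_nonneg_left ?_ (by positivity)
    exact Real.exp_le_exp.mpr (by nlinarith)
  · exact tendsto_pow_mul_exp_neg_atTop_nhds_zero n

lemma J_rec (n : ℕ) : ecfJ (n+2) = ecfJ (n+1) + ((n:ℝ)+1) * ecfJ n := by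
  have key : ∫ u in Set.Ioi (0:ℝ),
      (((n:ℝ)+1) * ecfG n u + ecfG (n+1) u - ecfG (n+2) u) = 0 - ecfG (n+1) 0 := by
    refine integral_Ioi_of_hasDerivAt_of_tendsto' (fun x _ => hasDerivAt_g n x) ?_
      (tendsto_g_atTop (n+1))
    exact ((((int_g n).const_mul _).add (int_g (n+1))).sub (int_g (n+2))).integrableOn
  have hg0 : ecfG (n+1) 0 = 0 := by simp [ecfG]
  have h1 : Integrable (fun u : ℝ => ((n:ℝ)+1) * ecfG n u + ecfG (n+1) u) :=
    ((int_g n).const_mul _).add (int_g (n+1))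
  have h2 : Integrable (fun u : ℝ => ((n:ℝ)+1) * ecfG n u) := (int_g n).const_mul _
  rw [hg0, integral_sub h1.integrableOn (int_g (n+2)).integrableOn,
    integral_add h2.integrableOn (int_g (n+1)).integrableOn,
    MeasureTheory.integral_const_mul] at key
  unfold ecfJ
  linarith [key]

lemma I_rec (n : ℕ) : ecfI (n+2) = ecfI (n+1) + ((n:ℝ)+1) * ecfI n := by
  have key : ∫ u : ℝ,
      (((n:ℝ)+1) * ecfG n u + ecfG (n+1) u - ecfG (n+2) u) = 0 := by
    refine integral_eq_zero_of_hasDerivAt_of_integrable (fun x => hasDerivAt_g n x) ?_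
      (int_g (n+1))
    exact (((int_g n).const_mul _).add (int_g (n+1))).sub (int_g (n+2))
  have h1 : Integrable (fun u : ℝ => ((n:ℝ)+1) * ecfG n u + ecfG (n+1) u) :=
    ((int_g n).const_mul _).add (int_g (n+1))
  have h2 : Integrable (fun u : ℝ => ((n:ℝ)+1) * ecfG n u) := (int_g n).const_mul _
  rw [integral_sub h1 (int_g (n+2)), integral_add h2 (int_g (n+1)),
    MeasureTheory.integral_const_mul] at key
  unfold ecfI
  linarith [key]


lemma hasDerivAt_negw (u : ℝ) :
    HasDerivAt (fun u : ℝ => -Real.exp (-(u - 1) ^ 2 / 2)) (ecfG 1 u - ecfG 0 u) u := by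
  have h2 : HasDerivAt (fun u : ℝ => Real.exp (-(u - 1) ^ 2 / 2))
      (-(u - 1) * Real.exp (-(u - 1) ^ 2 / 2)) u := by
    have hi : HasDerivAt (fun u : ℝ => -(u - 1) ^ 2 / 2) (-(u - 1)) u := by
      have h : HasDerivAt (fun u : ℝ => u - 1) 1 u := (hasDerivAt_id u).sub_const 1
      have h2 := (h.pow 2).neg.div_const 2
      refine h2.congr_deriv ?_
      ring
    simpa [mul_comm] using hi.exp
  refine h2.neg.congr_deriv ?_
  unfold ecfG
  ring

lemma g0_eq (u : ℝ) : ecfG 0 u = Real.exp (-(u - 1) ^ 2 / 2) := by simp [ecfG]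

lemma J1_sub_J0 : ecfJ 1 = ecfJ 0 + Real.exp (-(1:ℝ)/2) := by
  have key : ∫ u in Set.Ioi (0:ℝ), (ecfG 1 u - ecfG 0 u)
      = 0 - -Real.exp (-((0:ℝ) - 1) ^ 2 / 2) := by
    refine integral_Ioi_of_hasDerivAt_of_tendsto' (fun x _ => hasDerivAt_negw x)
      ((int_g 1).sub (int_g 0)).integrableOn ?_
    have := (tendsto_g_atTop 0).neg
    rw [neg_zero] at this
    refine this.congr fun u => by rw [g0_eq]
  rw [integral_sub (int_g 1).integrableOn (int_g 0).integrableOn] at key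
  unfold ecfJ
  norm_num at key ⊢
  linarith [key]

lemma I1_eq_I0 : ecfI 1 = ecfI 0 := by
  have key : ∫ u : ℝ, (ecfG 1 u - ecfG 0 u) = 0 := by
    refine integral_eq_zero_of_hasDerivAt_of_integrable (fun x => hasDerivAt_negw x)
      ((int_g 1).sub (int_g 0)) ?_
    exact ((int_g 0).congr (Filter.Eventually.of_forall fun u => g0_eq u)).neg
  rw [integral_sub (int_g 1) (int_g 0)] at key
  unfold ecfI
  linarith [key]

lemma I0_eq : ecfI 0 = Real.sqrt (2 * Real.pi) := by
  have h1 : ecfI 0 = ∫ x : ℝ, Real.exp (-x ^ 2 / 2) := by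
    unfold ecfI
    rw [← integral_sub_right_eq_self (fun x : ℝ => Real.exp (-x ^ 2 / 2)) 1]
    exact integral_congr_ae (Filter.Eventually.of_forall fun u => g0_eq u)
  have h2 : ∫ x : ℝ, Real.exp (-x ^ 2 / 2) = Real.sqrt (Real.pi / (1/2)) := by
    rw [← integral_gaussian (1/2)]
    exact integral_congr_ae (Filter.Eventually.of_forall fun x => by norm_num; ring_nf)
  rw [h1, h2]
  norm_num
  rw [mul_comm]


lemma k_ge_one : ∀ n, 1 ≤ eulerCFk n := by
  have key : ∀ n, 1 ≤ eulerCFk n ∧ 1 ≤ eulerCFk (n+1) := by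
    intro n
    induction n with
    | zero => exact ⟨le_refl 1, le_refl 1⟩
    | succ m ih =>
      refine ⟨ih.2, ?_⟩
      show 1 ≤ eulerCFk (m+1) + ((m + 1 : ℕ) : ℤ) * eulerCFk m
      have := ih.1; have := ih.2
      have hm : (0:ℤ) ≤ ((m + 1 : ℕ) : ℤ) := by positivity
      nlinarith
  exact fun n => (key n).1

lemma k_pos_real (n : ℕ) : (0:ℝ) < (eulerCFk n : ℝ) := by
  have := k_ge_one n
  exact_mod_cast lt_of_lt_of_le zero_lt_one (by exact_mod_cast this)

lemma I_eq_k (n : ℕ) : ecfI n = Real.sqrt (2 * Real.pi) * (eulerCFk n : ℝ) := by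
  have key : ∀ m, ecfI m = Real.sqrt (2 * Real.pi) * (eulerCFk m : ℝ) ∧
      ecfI (m+1) = Real.sqrt (2 * Real.pi) * (eulerCFk (m+1) : ℝ) := by
    intro m
    induction m with
    | zero =>
      constructor
      · rw [I0_eq]; norm_num [eulerCFk]
      · rw [I1_eq_I0, I0_eq]; norm_num [eulerCFk]
    | succ m ih =>
      refine ⟨ih.2, ?_⟩
      rw [I_rec m, ih.1, ih.2]
      show _ = Real.sqrt (2 * Real.pi) * ((eulerCFk (m+1) + ((m + 1 : ℕ) : ℤ) * eulerCFk m : ℤ) : ℝ)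
      push_cast
      ring
  exact (key n).1

lemma h_eq (n : ℕ) :
    (eulerCFh n : ℝ) = Real.exp ((1:ℝ)/2) * (ecfJ n - ecfJ 0 * (eulerCFk n : ℝ)) := by
  have key : ∀ m, ((eulerCFh m : ℝ) = Real.exp ((1:ℝ)/2) * (ecfJ m - ecfJ 0 * (eulerCFk m : ℝ)))
      ∧ ((eulerCFh (m+1) : ℝ) = Real.exp ((1:ℝ)/2) * (ecfJ (m+1) - ecfJ 0 * (eulerCFk (m+1) : ℝ))) := by
    intro m
    induction m with
    | zero =>
      constructor
      · norm_num [eulerCFh, eulerCFk]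
      · show ((1:ℤ) : ℝ) = _
        rw [show eulerCFk 1 = 1 from rfl, J1_sub_J0]
        push_cast
        have : rexp (1/2) * rexp (-1/2) = 1 := by rw [← Real.exp_add]; norm_num
        nlinarith [this]
    | succ m ih =>
      refine ⟨ih.2, ?_⟩
      rw [J_rec m]
      show ((eulerCFh (m+1) + ((m + 1 : ℕ) : ℤ) * eulerCFh m : ℤ) : ℝ)
        = _ * (_ - ecfJ 0 * ((eulerCFk (m+1) + ((m + 1 : ℕ) : ℤ) * eulerCFk m : ℤ) : ℝ))
      push_cast
      rw [ih.1, ih.2]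
      ring
  exact (key n).1


def ecfPhi (n : ℕ) (u : ℝ) : ℝ := u ^ n * Real.exp (-(u + 1) ^ 2 / 2)

def ecfD (n : ℕ) : ℝ := ∫ u in Set.Ioi (0:ℝ), ecfPhi n u

lemma int_phi (n : ℕ) : Integrable (ecfPhi n) := by
  refine (int_shift_pow_gauss (-1) n).congr (Filter.Eventually.of_forall fun u => ?_)
  unfold ecfPhi
  ring_nf

lemma g_nonneg_on {n : ℕ} {u : ℝ} (hu : 0 ≤ u) : 0 ≤ ecfG n u := by
  unfold ecfG; positivity

lemma E_abs_le (n : ℕ) : |ecfE n| ≤ ecfD n := by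
  have h1 : |ecfE n| ≤ ∫ u in Set.Iic (0:ℝ), |ecfG n u| := by
    have := MeasureTheory.norm_integral_le_integral_norm (μ := volume.restrict (Set.Iic (0:ℝ)))
      (f := ecfG n)
    simpa [Real.norm_eq_abs, ecfE] using this
  have h2 : ∫ u in Set.Iic (0:ℝ), |ecfG n u| = ∫ u in Set.Ioi (0:ℝ), |ecfG n (-u)| := by
    have := integral_comp_neg_Iic (0:ℝ) (fun x => |ecfG n (-x)|)
    simp only [neg_neg, neg_zero] at this
    exact this
  have h3 : ∫ u in Set.Ioi (0:ℝ), |ecfG n (-u)| = ecfD n := by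
    refine setIntegral_congr_fun measurableSet_Ioi fun u hu => ?_
    have hu' : (0:ℝ) < u := hu
    unfold ecfG ecfPhi
    rw [abs_mul, abs_pow, abs_neg, abs_of_pos hu', Real.abs_exp,
      show (-u - 1)^2 = (u + 1)^2 by ring]
  rw [h2, h3] at h1
  exact h1

lemma sqrtn_ge {n : ℕ} (hn : 9 ≤ n) : (1:ℝ) ≤ Real.sqrt n / 3 := by
  have h3 : (3:ℝ) ≤ Real.sqrt n := by
    rw [show (3:ℝ) = Real.sqrt 9 by
      rw [show (9:ℝ) = 3^2 by norm_num, Real.sqrt_sq (by norm_num)]]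
    exact Real.sqrt_le_sqrt (by exact_mod_cast hn)
  linarith

lemma J_ge {n : ℕ} (hn : 9 ≤ n) :
    (2 * (Real.sqrt n / 3)) ^ n * Real.exp (-9 * (Real.sqrt n / 3) ^ 2 / 2) * (Real.sqrt n / 3)
      ≤ ecfJ n := by
  set A := Real.sqrt n / 3 with hA
  have hA1 : (1:ℝ) ≤ A := sqrtn_ge hn
  have hsub : Set.Ioc (2*A) (3*A) ⊆ Set.Ioi (0:ℝ) := fun u hu => by
    have := hu.1; simp only [Set.mem_Ioi]; linarith
  have step1 : ∫ u in Set.Ioc (2*A) (3*A), ecfG n u ≤ ecfJ n := by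
    refine setIntegral_mono_set (int_g n).integrableOn ?_ hsub.eventuallyLE
    refine (ae_restrict_iff' measurableSet_Ioi).2 (Filter.Eventually.of_forall fun u hu => ?_)
    exact g_nonneg_on (le_of_lt hu)
  refine le_trans ?_ step1
  have step2 : ∫ u in Set.Ioc (2*A) (3*A),
      ((2*A) ^ n * Real.exp (-9 * A ^ 2 / 2)) ≤ ∫ u in Set.Ioc (2*A) (3*A), ecfG n u := by
    refine setIntegral_mono_on
      (integrableOn_const measure_Ioc_lt_top.ne)
      (int_g n).integrableOn measurableSet_Ioc fun u hu => ?_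
    have h1 := hu.1
    have h2 := hu.2
    unfold ecfG
    have hp : (2*A) ^ n ≤ u ^ n := pow_le_pow_left₀ (by linarith) (le_of_lt h1) n
    have he : Real.exp (-9 * A ^ 2 / 2) ≤ Real.exp (-(u - 1) ^ 2 / 2) :=
      Real.exp_le_exp.mpr (by nlinarith)
    exact mul_le_mul hp he (Real.exp_pos _).le (pow_nonneg (by linarith) n)
  refine le_trans ?_ step2
  rw [MeasureTheory.setIntegral_const, Real.volume_real_Ioc_of_le (by linarith), smul_eq_mul]
  have : (3 * A - 2 * A) = A := by ring
  rw [this]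
  ring_nf
  exact le_refl _

lemma D_le {n : ℕ} (hn : 9 ≤ n) :
    ecfD n ≤ ((Real.sqrt (Real.exp 1) / 2) ^ n + Real.exp (-2 * (Real.sqrt n / 3))) * ecfJ n := by
  set A := Real.sqrt n / 3 with hA
  have hA1 : (1:ℝ) ≤ A := sqrtn_ge hn
  have hA0 : (0:ℝ) < A := by linarith
  have hA2 : A ^ 2 = (n:ℝ) / 9 := by
    rw [hA, div_pow, Real.sq_sqrt (by positivity : (0:ℝ) ≤ (n:ℝ))]
    norm_num
  -- split
  have hsplit : ecfD n = (∫ u in Set.Ioc 0 A, ecfPhi n u) + ∫ u in Set.Ioi A, ecfPhi n u := by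
    unfold ecfD
    rw [← Set.Ioc_union_Ioi_eq_Ioi (le_of_lt hA0),
      MeasureTheory.setIntegral_union (Set.Ioc_disjoint_Ioi le_rfl) measurableSet_Ioi
        (int_phi n).integrableOn (int_phi n).integrableOn]
  -- piece 1
  have piece1 : (∫ u in Set.Ioc 0 A, ecfPhi n u) ≤ A ^ (n+1) := by
    have hb : (∫ u in Set.Ioc 0 A, ecfPhi n u) ≤ ∫ _ in Set.Ioc 0 A, A ^ n := by
      refine setIntegral_mono_on (int_phi n).integrableOn
        (integrableOn_const measure_Ioc_lt_top.ne) measurableSet_Ioc fun u hu => ?_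
      unfold ecfPhi
      have h1 := hu.1
      have h2 := hu.2
      calc u ^ n * Real.exp (-(u + 1) ^ 2 / 2) ≤ u ^ n * 1 := by
            refine mul_le_mul_of_nonneg_left ?_ (by positivity)
            exact Real.exp_le_one_iff.mpr (by nlinarith)
        _ ≤ A ^ n := by
            rw [mul_one]
            exact pow_le_pow_left₀ (le_of_lt h1) h2 n
    refine hb.trans ?_
    rw [MeasureTheory.setIntegral_const, Real.volume_real_Ioc_of_le (by linarith), smul_eq_mul,
      sub_zero, pow_succ]
    ring_nf
    exact le_refl _
  -- piece 2
  have piece2 : (∫ u in Set.Ioi A, ecfPhi n u) ≤ Real.exp (-2*A) * ecfJ n := by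
    have hb : (∫ u in Set.Ioi A, ecfPhi n u)
        ≤ ∫ u in Set.Ioi A, Real.exp (-2*A) * ecfG n u := by
      refine setIntegral_mono_on (int_phi n).integrableOn
        ((int_g n).const_mul _).integrableOn measurableSet_Ioi fun u hu => ?_
      have h1 : A < u := hu
      unfold ecfPhi ecfG
      have hid : Real.exp (-(u + 1) ^ 2 / 2)
          = Real.exp (-(u - 1) ^ 2 / 2) * Real.exp (-2*u) := by
        rw [← Real.exp_add]
        congr 1
        ring
      rw [hid]
      have : Real.exp (-2*u) ≤ Real.exp (-2*A) := Real.exp_le_exp.mpr (by linarith)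
      calc u ^ n * (Real.exp (-(u - 1) ^ 2 / 2) * Real.exp (-2*u))
          ≤ u ^ n * (Real.exp (-(u - 1) ^ 2 / 2) * Real.exp (-2*A)) := by
            refine mul_le_mul_of_nonneg_left ?_ (pow_nonneg (by linarith) n)
            exact mul_le_mul_of_nonneg_left this (Real.exp_pos _).le
        _ = Real.exp (-2*A) * (u ^ n * Real.exp (-(u - 1) ^ 2 / 2)) := by ring
    refine hb.trans ?_
    rw [MeasureTheory.integral_const_mul]
    refine mul_le_mul_of_nonneg_left ?_ (Real.exp_pos _).le
    refine setIntegral_mono_set (int_g n).integrableOn ?_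
      (Set.Ioi_subset_Ioi (le_of_lt hA0)).eventuallyLE
    refine (ae_restrict_iff' measurableSet_Ioi).2 (Filter.Eventually.of_forall fun u hu => ?_)
    exact g_nonneg_on (le_of_lt hu)
  -- key identity A^(n+1) = (√e/2)^n * lower bound of J
  have hkey : A ^ (n+1)
      = (Real.sqrt (Real.exp 1) / 2) ^ n * ((2*A) ^ n * Real.exp (-9 * A ^ 2 / 2) * A) := by
    rw [← Real.exp_half 1]
    have h2 : Real.exp ((1:ℝ)/2) ^ n * Real.exp (-9 * A ^ 2 / 2) = 1 := by
      rw [← Real.exp_nat_mul, ← Real.exp_add, hA2,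
        show (n:ℝ) * (1/2) + -9 * ((n:ℝ)/9) / 2 = 0 by ring]
      exact Real.exp_zero
    have hhalf : ((1:ℝ)/2) ^ n * (2:ℝ) ^ n = 1 := by
      rw [← mul_pow]; norm_num
    refine Eq.symm ?_
    calc (Real.exp ((1:ℝ)/2) / 2) ^ n * ((2*A) ^ n * Real.exp (-9 * A ^ 2 / 2) * A)
        = (Real.exp ((1:ℝ)/2) ^ n * Real.exp (-9 * A ^ 2 / 2))
            * ((((1:ℝ)/2) ^ n * (2:ℝ) ^ n) * (A ^ n * A)) := by
          rw [div_pow, mul_pow, one_div_pow]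
          ring
      _ = A ^ (n+1) := by rw [h2, hhalf, pow_succ]; ring
  have hJge := J_ge hn
  have hpow0 : (0:ℝ) ≤ (Real.sqrt (Real.exp 1) / 2) ^ n := by positivity
  calc ecfD n ≤ A ^ (n+1) + Real.exp (-2*A) * ecfJ n := by
        rw [hsplit]; exact add_le_add piece1 piece2
    _ ≤ (Real.sqrt (Real.exp 1) / 2) ^ n * ecfJ n + Real.exp (-2*A) * ecfJ n := by
        rw [hkey]
        exact add_le_add_left (mul_le_mul_of_nonneg_left hJge hpow0) _
    _ = ((Real.sqrt (Real.exp 1) / 2) ^ n + Real.exp (-2 * A)) * ecfJ n := by ring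

lemma J_pos {n : ℕ} (hn : 9 ≤ n) : 0 < ecfJ n := by
  have h := J_ge hn
  have hA1 : (1:ℝ) ≤ Real.sqrt n / 3 := sqrtn_ge hn
  have : (0:ℝ) < (2 * (Real.sqrt n / 3)) ^ n
      * Real.exp (-9 * (Real.sqrt n / 3) ^ 2 / 2) * (Real.sqrt n / 3) := by positivity
  linarith


lemma tendsto_sqrt_nat : Tendsto (fun n : ℕ => Real.sqrt n) atTop atTop := by
  apply tendsto_atTop_atTop_of_monotone
  · intro a b hab
    exact Real.sqrt_le_sqrt (Nat.cast_le.mpr hab)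
  · intro b
    refine ⟨⌈b^2⌉₊, ?_⟩
    have h1 : b^2 ≤ ((⌈b^2⌉₊ : ℕ) : ℝ) := Nat.le_ceil _
    calc b ≤ |b| := le_abs_self b
      _ = Real.sqrt (b^2) := (Real.sqrt_sq_eq_abs b).symm
      _ ≤ _ := Real.sqrt_le_sqrt h1

lemma tendsto_bound :
    Tendsto (fun n : ℕ => (Real.sqrt (Real.exp 1) / 2) ^ n
      + Real.exp (-2 * (Real.sqrt n / 3))) atTop (nhds 0) := by
  have hgeom : Tendsto (fun n : ℕ => (Real.sqrt (Real.exp 1) / 2) ^ n) atTop (nhds 0) := by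
    apply tendsto_pow_atTop_nhds_zero_of_lt_one (by positivity)
    rw [div_lt_one (by norm_num)]
    rw [Real.sqrt_lt' (by norm_num)]
    have := Real.exp_one_lt_d9
    linarith
  have hexp : Tendsto (fun n : ℕ => Real.exp (-2 * (Real.sqrt n / 3))) atTop (nhds 0) := by
    have h1 : Tendsto (fun n : ℕ => (2/3:ℝ) * Real.sqrt n) atTop atTop :=
      tendsto_sqrt_nat.const_mul_atTop (by norm_num)
    have h2 : Tendsto (fun n : ℕ => -((2/3:ℝ) * Real.sqrt n)) atTop atBot :=
      tendsto_neg_atTop_atBot.comp h1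
    have h3 := Real.tendsto_exp_atBot.comp h2
    refine h3.congr fun n => ?_
    simp only [Function.comp_apply]
    congr 1
    ring
  simpa using hgeom.add hexp

lemma I_split (n : ℕ) : ecfI n = ecfE n + ecfJ n := by
  unfold ecfI ecfE ecfJ
  rw [← MeasureTheory.setIntegral_univ, ← Set.Iic_union_Ioi (a := (0:ℝ)),
    MeasureTheory.setIntegral_union (Set.Iic_disjoint_Ioi le_rfl) measurableSet_Ioi
      (int_g n).integrableOn (int_g n).integrableOn]

lemma tendsto_EJ : Tendsto (fun n => ecfE n / ecfJ n) atTop (nhds 0) := by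
  refine squeeze_zero_norm' ?_ tendsto_bound
  filter_upwards [eventually_ge_atTop 9] with n hn
  have hJ := J_pos hn
  rw [Real.norm_eq_abs, abs_div, abs_of_pos hJ, div_le_iff₀ hJ]
  exact (E_abs_le n).trans (D_le hn)

lemma tendsto_IJ : Tendsto (fun n => ecfI n / ecfJ n) atTop (nhds 1) := by
  have h : Tendsto (fun n => ecfE n / ecfJ n + 1) atTop (nhds 1) := by
    simpa using tendsto_EJ.add tendsto_const_nhds
  refine Tendsto.congr' ?_ h
  filter_upwards [eventually_ge_atTop 9] with n hn
  rw [I_split n]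
  field_simp [ne_of_gt (J_pos hn)]

lemma tendsto_Jk : Tendsto (fun n => ecfJ n / (eulerCFk n : ℝ)) atTop
    (nhds (Real.sqrt (2 * Real.pi))) := by
  have hinv : Tendsto (fun n => (ecfI n / ecfJ n)⁻¹) atTop (nhds 1) := by
    simpa using tendsto_IJ.inv₀ one_ne_zero
  have h2 : Tendsto (fun n => Real.sqrt (2 * Real.pi) * (ecfI n / ecfJ n)⁻¹) atTop
      (nhds (Real.sqrt (2 * Real.pi))) := by
    simpa using hinv.const_mul (Real.sqrt (2 * Real.pi))
  refine Tendsto.congr (fun n => ?_) h2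
  have hs : (0:ℝ) < Real.sqrt (2 * Real.pi) :=
    Real.sqrt_pos.2 (by positivity)
  have hk : (eulerCFk n : ℝ) = ecfI n / Real.sqrt (2 * Real.pi) := by
    rw [I_eq_k n]
    field_simp
  rw [hk, inv_div, div_div_eq_mul_div]
  ring

lemma shift_Ioi (f : ℝ → ℝ) :
    ∫ x in Set.Ioi (0:ℝ), f (x + 1) = ∫ x in Set.Ioi (1:ℝ), f x := by
  rw [← MeasureTheory.integral_indicator measurableSet_Ioi,
    ← MeasureTheory.integral_indicator measurableSet_Ioi,
    ← MeasureTheory.integral_add_right_eq_self ((Set.Ioi (1:ℝ)).indicator f) 1]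
  congr 1
  funext x
  by_cases hx : (0:ℝ) < x
  · rw [Set.indicator_of_mem (Set.mem_Ioi.2 hx),
      Set.indicator_of_mem (Set.mem_Ioi.2 (by linarith : (1:ℝ) < x + 1))]
  · rw [Set.indicator_of_notMem (by simpa using hx),
      Set.indicator_of_notMem (by simp; linarith [not_lt.1 hx])]

lemma E0_eq : ecfE 0 = ∫ t in Set.Ioi (1:ℝ), Real.exp (-t ^ 2 / 2) := by
  have h2 : ecfE 0 = ∫ u in Set.Ioi (0:ℝ), ecfG 0 (-u) := by
    have := integral_comp_neg_Iic (0:ℝ) (fun x => ecfG 0 (-x))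
    simp only [neg_neg, neg_zero] at this
    exact this
  rw [h2]
  have h3 : ∀ u : ℝ, ecfG 0 (-u) = (fun t => Real.exp (-t ^ 2 / 2)) (u + 1) := by
    intro u
    rw [g0_eq]
    simp only
    congr 1
    ring
  calc ∫ u in Set.Ioi (0:ℝ), ecfG 0 (-u)
      = ∫ u in Set.Ioi (0:ℝ), (fun t => Real.exp (-t ^ 2 / 2)) (u + 1) := by
        exact setIntegral_congr_fun measurableSet_Ioi fun u _ => h3 u
    _ = ∫ t in Set.Ioi (1:ℝ), Real.exp (-t ^ 2 / 2) := shift_Ioi (fun t => Real.exp (-t ^ 2 / 2))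

end EulerCF29

/-- The convergents `0/1, 1/1, 1/2, 3/4, 6/10, 18/26, 48/76, 156/232, …` of Euler's
continued fraction (§29) converge, with limit `√e ∫_1^∞ e^{-t²/2} dt`. -/
theorem eulerCF_section29_tendsto :
    Filter.Tendsto (fun n : ℕ => (eulerCFh n : ℝ) / (eulerCFk n : ℝ)) Filter.atTop
      (nhds (Real.sqrt (Real.exp 1) * ∫ t in Set.Ioi (1 : ℝ), Real.exp (-t ^ 2 / 2))) := by
  have hfun : ∀ n, (eulerCFh n : ℝ) / (eulerCFk n : ℝ)
      = Real.exp ((1:ℝ)/2) * (ecfJ n / (eulerCFk n : ℝ)) - Real.exp ((1:ℝ)/2) * ecfJ 0 := by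
    intro n
    rw [h_eq n]
    field_simp [ne_of_gt (k_pos_real n)]
  have hlim := (tendsto_Jk.const_mul (Real.exp ((1:ℝ)/2))).sub_const
    (Real.exp ((1:ℝ)/2) * ecfJ 0)
  have hval : Real.exp ((1:ℝ)/2) * Real.sqrt (2 * Real.pi) - Real.exp ((1:ℝ)/2) * ecfJ 0
      = Real.sqrt (Real.exp 1) * ∫ t in Set.Ioi (1 : ℝ), Real.exp (-t ^ 2 / 2) := by
    rw [← Real.exp_half 1, ← E0_eq]
    have h4 : Real.sqrt (2 * Real.pi) = ecfE 0 + ecfJ 0 := by rw [← I_split 0, I0_eq]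
    rw [h4]
    ring
  rw [hval] at hlim
  exact Filter.Tendsto.congr (fun n => (hfun n).symm) hlim
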